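/- Let P : ℕ → Prop and let s : ℕ → ℕ → Bool be such that for every i, the sequence s i semidecides P i. Then ω · 3 ≤ Ψ(s) if and only if ∃ n : ℕ, P n. -/

import Mathlib

/-- A Boolean sequence `b` semidecides a proposition `Q` if `Q ↔ ∃ j, b j = true`. -/
def Semidecides (b : ℕ → Bool) (Q : Prop) : Prop :=
  Q ↔ ∃ j, b j = true

open Classical in
/-- `tCount s n k` is the number of indices `i < n` such that `s i j = true` for some `j ≤ k`. -/
noncomputable def tCount (s : ℕ → ℕ → Bool) (n k : ℕ) : ℕ :=
  ((Finset.range n).filter (fun i => ∃ j ≤ k, s i j = true)).card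

/-- The `n`-th characteristic approximant `Ψₙ(s)`. -/
noncomputable def psiApprox (s : ℕ → ℕ → Bool) (n : ℕ) : Ordinal :=
  ⨆ k : ℕ, (Ordinal.omega0 * (tCount s n k) + k)

/-- The characteristic ordinal `Ψ(s)`. -/
noncomputable def psi (s : ℕ → ℕ → Bool) : Ordinal :=
  ⨆ n : ℕ, (psiApprox s n + n)

open Ordinal in
theorem countable_join_omega_mul_three (P : ℕ → Prop) (s : ℕ → ℕ → Bool)
    (hs : ∀ i, Semidecides (s i) (P i)) :
    Ordinal.omega0 * 3 ≤ psi s ↔ ∃ n : ℕ, P n := by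
  constructor
  · intro h
    by_contra hn
    push_neg at hn
    have hfalse : ∀ i j, s i j = false := by
      intro i j
      by_contra hf
      exact hn i ((hs i).mpr ⟨j, by simpa using hf⟩)
    have ht : ∀ n k, tCount s n k = 0 := by
      intro n k
      simp [tCount, hfalse]
    have hpa : ∀ n, psiApprox s n ≤ omega0 := by
      intro n
      apply ciSup_le'
      intro k
      simp only [ht, Nat.cast_zero, mul_zero, zero_add]
      exact (nat_lt_omega0 k).le
    have hpsi : psi s ≤ omega0 * 2 := by
      apply ciSup_le'
      intro n
      rw [show omega0 * 2 = omega0 + omega0 from by rw [show (2:Ordinal) = 1 + 1 from one_add_one_eq_two.symm, mul_add, mul_one]]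
      exact add_le_add (hpa n) (nat_lt_omega0 n).le
    have h3 : omega0 * 2 < omega0 * 3 :=
      mul_lt_mul_of_pos_left (by exact_mod_cast (by norm_num : (2:ℕ) < 3)) omega0_pos
    exact absurd (h.trans hpsi) (not_le.mpr h3)
  · rintro ⟨m, hm⟩
    obtain ⟨j, hj⟩ := (hs m).mp hm
    have hone : ∀ n, m < n → ∀ k, j ≤ k → 1 ≤ tCount s n k := by
      intro n hn k hk
      have hmem : m ∈ (Finset.range n).filter
          (fun i => decide (∃ j' ≤ k, s i j' = true)) :=
        Finset.mem_filter.mpr ⟨Finset.mem_range.mpr hn, by simp; exact ⟨j, hk, hj⟩⟩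
      have : 0 < tCount s n k := by
        classical
        exact Finset.card_pos.mpr ⟨m, by simpa [tCount] using hmem⟩
      omega
    have hpa : ∀ n, m < n → omega0 * 2 ≤ psiApprox s n := by
      intro n hn
      rw [show omega0 * 2 = omega0 + omega0 from by rw [show (2:Ordinal) = 1 + 1 from one_add_one_eq_two.symm, mul_add, mul_one]]
      rw [add_le_iff_of_isSuccLimit isSuccLimit_omega0]
      intro c hc
      obtain ⟨k, rfl⟩ := lt_omega0.mp hc
      have hk := hone n hn (max j k) (le_max_left _ _)
      calc omega0 + (k : Ordinal)
          ≤ omega0 * (tCount s n (max j k)) + ((max j k : ℕ) : Ordinal) := by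
            apply add_le_add
            · calc omega0 = omega0 * 1 := (mul_one _).symm
                _ ≤ omega0 * (tCount s n (max j k)) :=
                    mul_le_mul_right (by exact_mod_cast hk) _
            · exact_mod_cast le_max_right j k
        _ ≤ psiApprox s n := le_ciSup (Ordinal.bddAbove_range _) (max j k)
    rw [show omega0 * 3 = omega0 * 2 + omega0 from by
      rw [show (3 : Ordinal) = 2 + 1 by norm_num, mul_add, mul_one]]
    rw [add_le_iff_of_isSuccLimit isSuccLimit_omega0]
    intro c hc
    obtain ⟨k, rfl⟩ := lt_omega0.mp hc
    calc omega0 * 2 + (k : Ordinal)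
        ≤ psiApprox s (m + 1 + k) + ((m + 1 + k : ℕ) : Ordinal) :=
          add_le_add (hpa _ (by omega)) (by exact_mod_cast by omega)
      _ ≤ psi s := le_ciSup (Ordinal.bddAbove_range _) (m + 1 + k)
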